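/- Let A be a set of 2d points in general position in ℝ^d (every d+1 of them are affinely independent), and let U, W ⊆ A be disjoint subsets with |U| = u, |W| = w, 2 ≤ u ≤ d, 2 ≤ w ≤ d, and u + w ≥ d + 1. Suppose the (u-1)-simplex spanned by U crosses the (w-1)-simplex spanned by W, i.e., the intrinsic (relative) interiors of the convex hulls of U and W have a common point. Then for any two disjoint subsets U', W' ⊆ A with U ⊆ U', W ⊆ W', and |U'| = |W'| = d, the intrinsic interiors of the convex hulls of U' and W' also have a common point. -/

import Mathlib

open Set Finset

attribute [local instance] AffineSubspace.toNormedAddTorsor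

set_option maxHeartbeats 1000000 in
lemma mem_intrinsicInterior_simplex {d : ℕ} (s : Finset (EuclideanSpace ℝ (Fin d)))
    (hne : s.Nonempty)
    (hind : AffineIndependent ℝ (fun x : s => (x : EuclideanSpace ℝ (Fin d))))
    (x : EuclideanSpace ℝ (Fin d)) :
    x ∈ intrinsicInterior ℝ (convexHull ℝ (s : Set (EuclideanSpace ℝ (Fin d)))) ↔
      ∃ f : EuclideanSpace ℝ (Fin d) → ℝ, (∀ p ∈ s, 0 < f p) ∧ (∑ p ∈ s, f p) = 1 ∧
        ∑ p ∈ s, f p • p = x := by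
  classical
  set T : AffineSubspace ℝ (EuclideanSpace ℝ (Fin d)) :=
    affineSpan ℝ (convexHull ℝ (s : Set (EuclideanSpace ℝ (Fin d)))) with hT
  have hTs : T = affineSpan ℝ (s : Set (EuclideanSpace ℝ (Fin d))) := affineSpan_convexHull _
  have hsub : (s : Set (EuclideanSpace ℝ (Fin d))) ⊆ (T : Set (EuclideanSpace ℝ (Fin d))) := by
    rw [hTs]; exact subset_affineSpan ℝ _
  haveI : Nonempty T := by
    obtain ⟨p, hp⟩ := hne
    exact ⟨⟨p, hsub hp⟩⟩
  set pt : s → T := fun i => ⟨(i : EuclideanSpace ℝ (Fin d)), hsub i.2⟩ with hpt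
  have hptind : AffineIndependent ℝ pt := by
    apply AffineIndependent.of_comp T.subtype
    exact hind
  have hcoe : (Subtype.val : T → EuclideanSpace ℝ (Fin d)) '' Set.range pt
      = (s : Set (EuclideanSpace ℝ (Fin d))) := by
    ext p
    constructor
    · rintro ⟨q, ⟨i, rfl⟩, rfl⟩; exact i.2
    · intro hp; exact ⟨pt ⟨p, hp⟩, ⟨⟨p, hp⟩, rfl⟩, rfl⟩
  have hptspan : affineSpan ℝ (Set.range pt) = (⊤ : AffineSubspace ℝ T) := by
    rw [eq_top_iff]
    rintro ⟨y, hy⟩ -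
    have hy' : y ∈ affineSpan ℝ (s : Set (EuclideanSpace ℝ (Fin d))) := hTs ▸ hy
    have hcoe' : (⇑T.subtype) '' Set.range pt = (s : Set (EuclideanSpace ℝ (Fin d))) := hcoe
    rw [← hcoe', ← AffineSubspace.map_span T.subtype (Set.range pt)] at hy'
    obtain ⟨z, hz, hzy⟩ := (AffineSubspace.mem_map).1 hy'
    have : z = ⟨y, hy⟩ := Subtype.ext hzy
    rwa [this] at hz
  obtain ⟨p0, hp0⟩ := hne
  set p0' : T := ⟨p0, hsub hp0⟩ with hp0'
  set φ : T ≃ᵃⁱ[ℝ] T.direction := AffineIsometryEquiv.constVSub ℝ p0' with hφ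
  set ψ : T.direction →ᵃ[ℝ] EuclideanSpace ℝ (Fin d) :=
    T.subtype.comp φ.symm.toAffineEquiv.toAffineMap with hψ
  have hψinj : Function.Injective ψ :=
    Subtype.coe_injective.comp φ.symm.injective
  have hψφ : ∀ y : T, ψ (φ y) = (y : EuclideanSpace ℝ (Fin d)) := by
    intro y
    simp [hψ, AffineMap.comp_apply]
  set q : s → T.direction := fun i => φ (pt i) with hq
  have hqind : AffineIndependent ℝ q := by
    apply AffineIndependent.of_comp ψ
    have : ⇑ψ ∘ q = fun i : s => (i : EuclideanSpace ℝ (Fin d)) := by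
      funext i
      simp only [Function.comp_apply, hq, hψφ]
      rfl
    rw [this]; exact hind
  have hqspan : affineSpan ℝ (Set.range q) = (⊤ : AffineSubspace ℝ T.direction) := by
    have : Set.range q = ⇑φ.toAffineEquiv.toAffineMap '' Set.range pt := by
      ext z; constructor
      · rintro ⟨i, rfl⟩; exact ⟨pt i, ⟨i, rfl⟩, rfl⟩
      · rintro ⟨y, ⟨i, rfl⟩, rfl⟩; exact ⟨i, rfl⟩
    rw [this, ← AffineSubspace.map_span, hptspan]
    exact AffineMap.map_top_of_surjective _ (by exact φ.surjective)
  set b : AffineBasis s ℝ T.direction := ⟨q, hqind, hqspan⟩ with hb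
  have hbq : ⇑b = q := rfl
  set A₀ : Set T.direction := convexHull ℝ (Set.range q) with hA₀
  have himg : ⇑ψ '' A₀ = convexHull ℝ (s : Set (EuclideanSpace ℝ (Fin d))) := by
    rw [hA₀, AffineMap.image_convexHull]
    congr 1
    ext p; constructor
    · rintro ⟨z, ⟨i, rfl⟩, rfl⟩
      show ψ (φ (pt i)) ∈ _
      rw [hψφ]; exact i.2
    · intro hp
      exact ⟨q ⟨p, hp⟩, ⟨⟨p, hp⟩, rfl⟩, hψφ _⟩
  have hpre : ((Subtype.val : T → EuclideanSpace ℝ (Fin d)) ⁻¹'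
      (convexHull ℝ (s : Set (EuclideanSpace ℝ (Fin d))))) = ⇑φ ⁻¹' A₀ := by
    rw [← himg]
    ext y
    simp only [Set.mem_preimage]
    constructor
    · rintro ⟨z, hz, hzy⟩
      have : z = φ y := hψinj (by rw [hψφ y]; exact hzy)
      rwa [← this]
    · intro h
      exact ⟨φ y, h, hψφ y⟩
  have hmem : ∀ z : EuclideanSpace ℝ (Fin d),
      z ∈ intrinsicInterior ℝ (convexHull ℝ (s : Set (EuclideanSpace ℝ (Fin d)))) ↔
      ∃ y : T, φ y ∈ interior A₀ ∧ (y : EuclideanSpace ℝ (Fin d)) = z := by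
    intro z
    have hφint : interior (⇑φ ⁻¹' A₀) = ⇑φ ⁻¹' interior A₀ :=
      (φ.toHomeomorph.preimage_interior A₀).symm
    rw [mem_intrinsicInterior]
    constructor
    · rintro ⟨y, hy, rfl⟩
      refine ⟨y, ?_, rfl⟩
      rw [hpre] at hy
      rw [hφint] at hy
      exact hy
    · rintro ⟨y, hy, rfl⟩
      refine ⟨y, ?_, rfl⟩
      rw [hpre, hφint]
      exact hy
  have hint : interior A₀ = {z : T.direction | ∀ i : s, 0 < b.coord i z} := by
    have : A₀ = convexHull ℝ (Set.range ⇑b) := by rw [hbq]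
    rw [this, b.interior_convexHull]
  rw [hmem]
  constructor
  · rintro ⟨y, hy, rfl⟩
    rw [hint] at hy
    refine ⟨fun p => if h : p ∈ s then b.coord ⟨p, h⟩ (φ y) else 0, ?_, ?_, ?_⟩
    · intro p hp; simpa [hp] using hy ⟨p, hp⟩
    · rw [← Finset.sum_attach s]
      simp only [Finset.coe_mem, dif_pos]
      exact b.sum_coord_apply_eq_one (φ y)
    · have hsum1 : ∑ i : s, b.coord i (φ y) = 1 := b.sum_coord_apply_eq_one (φ y)
      have hcomb := b.affineCombination_coord_eq_self (φ y)
      have := Finset.map_affineCombination Finset.univ ⇑b (fun i => b.coord i (φ y))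
        (by simpa using hsum1) ψ
      rw [hcomb] at this
      rw [hψφ] at this
      have hlin : (Finset.affineCombination ℝ Finset.univ (⇑ψ ∘ ⇑b))
          (fun i => b.coord i (φ y)) = ∑ i : s, b.coord i (φ y) • (ψ (b i)) := by
        rw [Finset.affineCombination_eq_linear_combination _ _ _ (by simpa using hsum1)]
        rfl
      rw [hlin] at this
      rw [← Finset.sum_attach s]
      simp only [Finset.coe_mem, dif_pos]
      rw [this, Finset.univ_eq_attach]
      exact (Finset.sum_congr rfl (fun i _ => by
        rw [show ψ (b i) = (i : EuclideanSpace ℝ (Fin d)) from hψφ (pt i)])).symm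
  · rintro ⟨f, hfpos, hfsum, hfx⟩
    set g : s → ℝ := fun i => f i with hg
    have hgsum : ∑ i : s, g i = 1 := by
      simp only [hg]
      rw [Finset.univ_eq_attach, Finset.sum_attach s f, hfsum]
    set z : T.direction := Finset.affineCombination ℝ Finset.univ ⇑b g with hz
    refine ⟨φ.symm z, ?_, ?_⟩
    · rw [φ.apply_symm_apply, hint]
      intro i
      rw [hz, b.coord_apply_combination_of_mem (Finset.mem_univ i) (by simpa using hgsum)]
      exact hfpos i i.2
    · have := Finset.map_affineCombination Finset.univ ⇑b g (by simpa using hgsum) ψ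
      have hψz : ψ z = (φ.symm z : EuclideanSpace ℝ (Fin d)) := by
        conv_lhs => rw [show z = φ (φ.symm z) by rw [φ.apply_symm_apply]]
        exact hψφ _
      rw [hψz] at this
      rw [this]
      rw [Finset.affineCombination_eq_linear_combination _ _ _ (by simpa using hgsum)]
      rw [← hfx, ← Finset.sum_attach s (fun p => f p • p)]
      congr 1
      funext i
      show g i • (ψ (φ (pt i))) = _
      rw [hψφ]

open Finset

lemma exists_solving_weights {d : ℕ} (B : Finset (EuclideanSpace ℝ (Fin d)))
    (hB : B.card = d + 1)
    (hind : AffineIndependent ℝ (fun x : B => (x : EuclideanSpace ℝ (Fin d))))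
    (v : EuclideanSpace ℝ (Fin d)) (c : ℝ) :
    ∃ μ : EuclideanSpace ℝ (Fin d) → ℝ,
      ∑ p ∈ B, μ p • p = v ∧ ∑ p ∈ B, μ p = c := by
  classical
  set L : (B → ℝ) →ₗ[ℝ] (EuclideanSpace ℝ (Fin d)) × ℝ :=
    { toFun := fun g => (∑ i : B, g i • (i : EuclideanSpace ℝ (Fin d)), ∑ i : B, g i)
      map_add' := by
        intro g h
        simp [add_smul, Finset.sum_add_distrib, Prod.mk_add_mk]
      map_smul' := by
        intro r g
        simp [smul_smul, Finset.smul_sum, Prod.smul_mk, Finset.mul_sum] } with hL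
  have hinj : Function.Injective L := by
    rw [← LinearMap.ker_eq_bot, LinearMap.ker_eq_bot']
    intro g hg
    have h1 : ∑ i : B, g i • (i : EuclideanSpace ℝ (Fin d)) = 0 := congrArg Prod.fst hg
    have h2 : ∑ i : B, g i = 0 := congrArg Prod.snd hg
    funext i
    exact affineIndependent_iff.1 hind Finset.univ g h2 h1 i (Finset.mem_univ i)
  have hfr : Module.finrank ℝ (B → ℝ) =
      Module.finrank ℝ ((EuclideanSpace ℝ (Fin d)) × ℝ) := by
    rw [Module.finrank_fintype_fun_eq_card, Module.finrank_prod, finrank_euclideanSpace_fin,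
      Module.finrank_self, Fintype.card_coe, hB]
  have hsurj : Function.Surjective L :=
    (LinearMap.injective_iff_surjective_of_finrank_eq_finrank hfr).1 hinj
  obtain ⟨g, hg⟩ := hsurj (v, c)
  refine ⟨fun p => if h : p ∈ B then g ⟨p, h⟩ else 0, ?_, ?_⟩
  · have h1 : ∑ i : B, g i • (i : EuclideanSpace ℝ (Fin d)) = v := congrArg Prod.fst hg
    rw [← Finset.sum_attach B]
    simp only [Finset.coe_mem, dif_pos]
    rw [← Finset.univ_eq_attach]
    exact (Finset.sum_congr rfl (fun i _ => by congr 1)).trans h1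
  · have h2 : ∑ i : B, g i = c := congrArg Prod.snd hg
    rw [← Finset.sum_attach B]
    simp only [Finset.coe_mem, dif_pos]
    rw [← Finset.univ_eq_attach]
    exact (Finset.sum_congr rfl (fun i _ => by congr 1)).trans h2

open Finset

lemma sum_if_mem {α M : Type*} [DecidableEq α] [AddCommMonoid M] (s t : Finset α)
    (h : t ⊆ s) (f : α → M) :
    ∑ p ∈ s, (if p ∈ t then f p else 0) = ∑ p ∈ t, f p := by
  rw [← Finset.sum_subset h (fun p _ hpt => if_neg hpt)]
  exact Finset.sum_congr rfl (fun p hp => if_pos hp)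

section Aux
variable {d : ℕ}

lemma indep_subset (A : Finset (EuclideanSpace ℝ (Fin d)))
    (hgen : ∀ s ⊆ A, s.card = d + 1 →
      AffineIndependent ℝ (fun x : s => (x : EuclideanSpace ℝ (Fin d))))
    (hcard : d + 1 ≤ A.card) (t : Finset (EuclideanSpace ℝ (Fin d))) (ht : t ⊆ A)
    (htc : t.card ≤ d + 1) :
    AffineIndependent ℝ (fun x : t => (x : EuclideanSpace ℝ (Fin d))) := by
  obtain ⟨t', htt', ht'A, ht'c⟩ := Finset.exists_subsuperset_card_eq ht htc hcard
  have h2 := hgen t' ht'A ht'c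
  have h3 : AffineIndependent ℝ (fun x : (t' : Set (EuclideanSpace ℝ (Fin d))) =>
      (x : EuclideanSpace ℝ (Fin d))) := h2
  exact h3.mono (by exact_mod_cast htt')

end Aux


set_option maxHeartbeats 1000000 in
/-- **crossing extension lemma.** Let `A` be a set of `2d` points in general
position in `ℝ^d`, and `U, W ⊆ A` disjoint with `|U| = u`, `|W| = w`, `2 ≤ u, w ≤ d`,
`u + w ≥ d + 1`. If the simplices spanned by `U` and `W` cross (their convex hulls share a
point of their relative interiors), then the `(d-1)`-simplices spanned by any disjoint
`U' ⊇ U`, `W' ⊇ W` inside `A` with `|U'| = |W'| = d` also cross. -/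
theorem crossing_extension (d u w : ℕ) (A : Finset (EuclideanSpace ℝ (Fin d)))
    (hA : A.card = 2 * d)
    (hgen : ∀ s ⊆ A, s.card = d + 1 →
      AffineIndependent ℝ (fun x : s => (x : EuclideanSpace ℝ (Fin d))))
    (U W : Finset (EuclideanSpace ℝ (Fin d)))
    (hUA : U ⊆ A) (hWA : W ⊆ A) (hUW : Disjoint U W)
    (hu : U.card = u) (hw : W.card = w)
    (hu2 : 2 ≤ u) (hud : u ≤ d) (hw2 : 2 ≤ w) (hwd : w ≤ d)
    (huw : d + 1 ≤ u + w)
    (hcross : (intrinsicInterior ℝ (convexHull ℝ (U : Set (EuclideanSpace ℝ (Fin d)))) ∩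
      intrinsicInterior ℝ (convexHull ℝ (W : Set (EuclideanSpace ℝ (Fin d))))).Nonempty) :
    ∀ U' W' : Finset (EuclideanSpace ℝ (Fin d)), U' ⊆ A → W' ⊆ A → Disjoint U' W' →
      U ⊆ U' → W ⊆ W' → U'.card = d → W'.card = d →
      (intrinsicInterior ℝ (convexHull ℝ (U' : Set (EuclideanSpace ℝ (Fin d)))) ∩
        intrinsicInterior ℝ (convexHull ℝ (W' : Set (EuclideanSpace ℝ (Fin d))))).Nonempty := by
  classical
  intro U' W' hU'A hW'A hUW' hUU' hWW' hcU' hcW'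
  have hd2 : 2 ≤ d := le_trans hu2 hud
  have hAcard : d + 1 ≤ A.card := by omega
  have hUne : U.Nonempty := Finset.card_pos.1 (by omega)
  have hWne : W.Nonempty := Finset.card_pos.1 (by omega)
  have hU'ne : U'.Nonempty := Finset.card_pos.1 (by omega)
  have hW'ne : W'.Nonempty := Finset.card_pos.1 (by omega)
  have hindU := indep_subset A hgen hAcard U hUA (by omega)
  have hindW := indep_subset A hgen hAcard W hWA (by omega)
  have hindU' := indep_subset A hgen hAcard U' hU'A (by omega)
  have hindW' := indep_subset A hgen hAcard W' hW'A (by omega)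
  obtain ⟨x, hxU, hxW⟩ := hcross
  rw [mem_intrinsicInterior_simplex U hUne hindU] at hxU
  rw [mem_intrinsicInterior_simplex W hWne hindW] at hxW
  obtain ⟨α, hαpos, hαsum, hαx⟩ := hxU
  obtain ⟨β, hβpos, hβsum, hβx⟩ := hxW
  -- the new points
  set S : Finset (EuclideanSpace ℝ (Fin d)) := U' \ U with hS
  set T' : Finset (EuclideanSpace ℝ (Fin d)) := W' \ W with hT'
  have hUS : Disjoint U S := Finset.disjoint_sdiff
  have hWT : Disjoint W T' := Finset.disjoint_sdiff
  have hSU' : S ⊆ U' := Finset.sdiff_subset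
  have hTW' : T' ⊆ W' := Finset.sdiff_subset
  have hUSeq : U ∪ S = U' := Finset.union_sdiff_of_subset hUU'
  have hWTeq : W ∪ T' = W' := Finset.union_sdiff_of_subset hWW'
  have hSW : Disjoint S W := (hUW'.mono hSU' hWW')
  have hUT : Disjoint U T' := (hUW'.mono hUU' hTW')
  have hST : Disjoint S T' := (hUW'.mono hSU' hTW')
  have hUUW' : U ⊆ U' ∪ W' := hUU'.trans Finset.subset_union_left
  have hWUW' : W ⊆ U' ∪ W' := hWW'.trans Finset.subset_union_right
  have hSUW' : S ⊆ U' ∪ W' := hSU'.trans Finset.subset_union_left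
  have hTUW' : T' ⊆ U' ∪ W' := hTW'.trans Finset.subset_union_right
  -- choose an affine basis inside U ∪ W
  have hUWcard : (U ∪ W).card = u + w := by
    rw [Finset.card_union_of_disjoint hUW, hu, hw]
  obtain ⟨B, hBsub, hBcard⟩ := Finset.exists_subset_card_eq
    (show d + 1 ≤ (U ∪ W).card by omega)
  have hBA : B ⊆ A := hBsub.trans (Finset.union_subset hUA hWA)
  have hBind := hgen B hBA hBcard
  have hBUW' : B ⊆ U' ∪ W' := hBsub.trans (Finset.union_subset hUUW' hWUW')
  have hBS : Disjoint B S := by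
    refine Finset.disjoint_left.2 fun p hpB hpS => ?_
    rcases Finset.mem_union.1 (hBsub hpB) with h | h
    · exact (Finset.disjoint_left.1 hUS) h hpS
    · exact (Finset.disjoint_left.1 hSW.symm) h hpS
  have hBT : Disjoint B T' := by
    refine Finset.disjoint_left.2 fun p hpB hpT => ?_
    rcases Finset.mem_union.1 (hBsub hpB) with h | h
    · exact (Finset.disjoint_left.1 hUT) h hpT
    · exact (Finset.disjoint_left.1 hWT) h hpT
  obtain ⟨μ0, hμ0v, hμ0c⟩ := exists_solving_weights B hBcard hBind
    ((∑ p ∈ T', p) - ∑ p ∈ S, p) ((T'.card : ℝ) - S.card)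
  -- the perturbation weights
  set μ : EuclideanSpace ℝ (Fin d) → ℝ := fun p =>
    (if p ∈ B then μ0 p else 0) + (if p ∈ S then 1 else 0) + (if p ∈ T' then -1 else 0)
    with hμ
  -- choose ε
  have hUWne : (U ∪ W).Nonempty := hUne.mono Finset.subset_union_left
  set ε : ℝ := (U ∪ W).inf' hUWne
    (fun p => (if p ∈ U then α p else β p) / (2 * (|μ p| + 1))) with hε
  have hεpos : 0 < ε := by
    rw [hε, Finset.lt_inf'_iff]
    intro p hp
    apply div_pos
    · by_cases hpU : p ∈ U
      · simpa [hpU] using hαpos p hpU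
      · have hpW : p ∈ W := (Finset.mem_union.1 hp).resolve_left hpU
        simpa [hpU] using hβpos p hpW
    · positivity
  have hεU : ∀ p ∈ U, ε * |μ p| < α p := by
    intro p hp
    have h1 : ε ≤ (if p ∈ U then α p else β p) / (2 * (|μ p| + 1)) :=
      Finset.inf'_le _ (Finset.mem_union_left _ hp)
    rw [if_pos hp] at h1
    have h2 : 0 < α p := hαpos p hp
    have hd0 : (0:ℝ) < 2 * (|μ p| + 1) := by positivity
    rw [le_div_iff₀ hd0] at h1
    nlinarith [abs_nonneg (μ p), hεpos]
  have hεW : ∀ p ∈ W, ε * |μ p| < β p := by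
    intro p hp
    have hpU : p ∉ U := Finset.disjoint_right.1 hUW hp
    have h1 : ε ≤ (if p ∈ U then α p else β p) / (2 * (|μ p| + 1)) :=
      Finset.inf'_le _ (Finset.mem_union_right _ hp)
    rw [if_neg hpU] at h1
    have h2 : 0 < β p := hβpos p hp
    have hd0 : (0:ℝ) < 2 * (|μ p| + 1) := by positivity
    rw [le_div_iff₀ hd0] at h1
    nlinarith [abs_nonneg (μ p), hεpos]
  -- the combined weights
  set g : EuclideanSpace ℝ (Fin d) → ℝ := fun p =>
    (if p ∈ U then α p else 0) + (if p ∈ W then -β p else 0) + ε * μ p with hg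
  have hgU : ∀ p ∈ U', 0 < g p := by
    intro p hp
    rcases Finset.mem_union.1 (hUSeq ▸ hp) with hpU | hpS
    · have hpW : p ∉ W := Finset.disjoint_left.1 hUW hpU
      have := hεU p hpU
      have hμlb : -(ε * |μ p|) ≤ ε * μ p := by
        have := neg_abs_le (μ p)
        nlinarith
      simp only [hg, if_pos hpU, if_neg hpW]
      linarith
    · have hpU : p ∉ U := (Finset.mem_sdiff.1 hpS).2
      have hpW : p ∉ W := Finset.disjoint_left.1 hSW hpS
      have hpB : p ∉ B := Finset.disjoint_right.1 hBS hpS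
      have hpT : p ∉ T' := Finset.disjoint_left.1 hST hpS
      simp only [hg, hμ, if_pos hpS, if_neg hpU, if_neg hpW, if_neg hpB, if_neg hpT]
      simpa using hεpos
  have hgW : ∀ p ∈ W', g p < 0 := by
    intro p hp
    rcases Finset.mem_union.1 (hWTeq ▸ hp) with hpW | hpT
    · have hpU : p ∉ U := Finset.disjoint_right.1 hUW hpW
      have := hεW p hpW
      have hμub : ε * μ p ≤ ε * |μ p| := by
        have := le_abs_self (μ p)
        nlinarith
      simp only [hg, if_pos hpW, if_neg hpU]
      linarith
    · have hpW : p ∉ W := (Finset.mem_sdiff.1 hpT).2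
      have hpU : p ∉ U := Finset.disjoint_right.1 hUT hpT
      have hpB : p ∉ B := Finset.disjoint_right.1 hBT hpT
      have hpS : p ∉ S := Finset.disjoint_right.1 hST hpT
      simp only [hg, hμ, if_pos hpT, if_neg hpU, if_neg hpW, if_neg hpB, if_neg hpS]
      simpa using hεpos
  -- sum of weights is zero
  have hμsum : ∑ p ∈ U' ∪ W', μ p = (T'.card : ℝ) - S.card + S.card - T'.card := by
    simp only [hμ]
    rw [Finset.sum_add_distrib, Finset.sum_add_distrib]
    rw [sum_if_mem _ _ hBUW', sum_if_mem _ _ hSUW', sum_if_mem _ _ hTUW', hμ0c]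
    simp [Finset.sum_const, nsmul_eq_mul]
  have hgsum : ∑ p ∈ U' ∪ W', g p = 0 := by
    simp only [hg]
    rw [Finset.sum_add_distrib, Finset.sum_add_distrib]
    rw [sum_if_mem _ _ hUUW', sum_if_mem _ _ hWUW', ← Finset.mul_sum, hμsum, hαsum]
    rw [Finset.sum_neg_distrib, hβsum]
    ring
  -- weighted sum of points is zero
  have hμvec : ∑ p ∈ U' ∪ W', μ p • p = 0 := by
    have expand : ∀ p : EuclideanSpace ℝ (Fin d), μ p • p =
        (if p ∈ B then μ0 p • p else 0) + (if p ∈ S then p else 0) +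
        (if p ∈ T' then -p else 0) := by
      intro p
      simp only [hμ, add_smul]
      congr 1
      · congr 1
        · split <;> simp
        · split <;> simp
      · split <;> simp
    rw [Finset.sum_congr rfl (fun p _ => expand p)]
    rw [Finset.sum_add_distrib, Finset.sum_add_distrib]
    rw [sum_if_mem _ _ hBUW', sum_if_mem _ _ hSUW', sum_if_mem _ _ hTUW', hμ0v]
    rw [Finset.sum_neg_distrib]
    abel
  have hgvec : ∑ p ∈ U' ∪ W', g p • p = 0 := by
    have expand : ∀ p : EuclideanSpace ℝ (Fin d), g p • p =
        (if p ∈ U then α p • p else 0) + (if p ∈ W then -(β p • p) else 0) +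
        ε • (μ p • p) := by
      intro p
      simp only [hg, add_smul]
      congr 1
      · congr 1
        · split <;> simp
        · split <;> simp [neg_smul]
      · rw [mul_smul]
    rw [Finset.sum_congr rfl (fun p _ => expand p)]
    rw [Finset.sum_add_distrib, Finset.sum_add_distrib]
    rw [sum_if_mem _ _ hUUW', sum_if_mem _ _ hWUW', ← Finset.smul_sum, hμvec, hαx]
    rw [Finset.sum_neg_distrib, hβx]
    simp
  -- normalize
  set csum : ℝ := ∑ p ∈ U', g p with hcsum
  have hcsumpos : 0 < csum := Finset.sum_pos hgU hU'ne
  have hsplit : ∑ p ∈ U', g p + ∑ p ∈ W', g p = 0 := by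
    rw [← Finset.sum_union hUW']; exact hgsum
  have hsplitvec : ∑ p ∈ U', g p • p + ∑ p ∈ W', g p • p = 0 := by
    rw [← Finset.sum_union hUW']; exact hgvec
  set y : EuclideanSpace ℝ (Fin d) := ∑ p ∈ U', (g p / csum) • p with hy
  refine ⟨y, ?_, ?_⟩
  · rw [mem_intrinsicInterior_simplex U' hU'ne hindU']
    refine ⟨fun p => g p / csum, fun p hp => div_pos (hgU p hp) hcsumpos, ?_, rfl⟩
    rw [← Finset.sum_div, ← hcsum, div_self (ne_of_gt hcsumpos)]
  · rw [mem_intrinsicInterior_simplex W' hW'ne hindW']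
    refine ⟨fun p => -g p / csum, fun p hp => div_pos (by linarith [hgW p hp]) hcsumpos, ?_, ?_⟩
    · rw [← Finset.sum_div]
      rw [Finset.sum_neg_distrib]
      rw [show -∑ p ∈ W', g p = csum by linarith]
      exact div_self (ne_of_gt hcsumpos)
    · have : ∀ p : EuclideanSpace ℝ (Fin d), (-g p / csum) • p = csum⁻¹ • (-(g p • p)) := by
        intro p
        rw [div_eq_inv_mul, mul_smul, neg_smul]
      rw [Finset.sum_congr rfl (fun p _ => this p), ← Finset.smul_sum,
        Finset.sum_neg_distrib]
      rw [show -∑ p ∈ W', g p • p = ∑ p ∈ U', g p • p from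
        neg_eq_of_add_eq_zero_left hsplitvec]
      rw [hy, Finset.smul_sum]
      exact Finset.sum_congr rfl fun p _ => by
        rw [div_eq_inv_mul, mul_smul]
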